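/- For Boolean functions f, g with k := Alt(f), ℓ := Alt(g), a := f(0,…,0), b := g(0,…,0): f is an M-minor of g (i.e., f = g(h_1,…,h_m) for some monotone Boolean functions h_i) if and only if k < ℓ or (k, a) = (ℓ, b), where M is the clone of all monotone Boolean functions. -/

import Mathlib

/-- The alternation number of a Boolean function `f`: the length of the longest
chain in `({0,1}ⁿ, ≤)` along which the value of `f` alternates. -/
noncomputable def altNum {n : ℕ} (f : (Fin n → Bool) → Bool) : ℕ :=
  sSup { d | ∃ a : Fin (d + 1) → (Fin n → Bool),
    StrictMono a ∧ ∀ i : Fin d, f (a i.castSucc) ≠ f (a i.succ) }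

namespace AltAux

variable {n : ℕ}

/-- `f` alternates along the chain `a`. -/
def Alternating (f : (Fin n → Bool) → Bool) {d : ℕ} (a : Fin (d+1) → (Fin n → Bool)) : Prop :=
  ∀ i : Fin d, f (a i.castSucc) ≠ f (a i.succ)

variable (f : (Fin n → Bool) → Bool)

/-- Lengths of alternating chains ending at `x`. -/
def DepSet (x : Fin n → Bool) : Set ℕ :=
  {d | ∃ a : Fin (d+1) → (Fin n → Bool), StrictMono a ∧ Alternating f a ∧ a (Fin.last d) = x}

/-- Lengths of alternating chains. -/
def AltSet : Set ℕ :=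
  {d | ∃ a : Fin (d+1) → (Fin n → Bool), StrictMono a ∧ Alternating f a}

variable {f}

lemma snoc_chain {d : ℕ} {a : Fin (d+1) → (Fin n → Bool)} (hm : StrictMono a)
    (hA : Alternating f a) {y : Fin n → Bool} (hy : a (Fin.last d) < y)
    (hf : f (a (Fin.last d)) ≠ f y) :
    ∃ b : Fin (d+1+1) → (Fin n → Bool), StrictMono b ∧ Alternating f b ∧
      b (Fin.last (d+1)) = y ∧ b 0 = a 0 := by
  refine ⟨fun j => if h : j.val < d + 1 then a ⟨j.val, h⟩ else y, ?_, ?_, ?_, ?_⟩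
  · intro i j hij
    rcases Fin.lt_def.mp hij with hij'
    by_cases hj : j.val < d + 1
    · have hi : i.val < d + 1 := by omega
      simp only [dif_pos hi, dif_pos hj]
      exact hm (Fin.mk_lt_mk.mpr hij')
    · have hi : i.val < d + 1 := by omega
      simp only [dif_pos hi, dif_neg hj]
      calc a ⟨i.val, hi⟩ ≤ a (Fin.last d) := hm.monotone (Fin.le_last _)
        _ < y := hy
  · intro i
    have hc : (i.castSucc).val < d + 1 := by have := i.isLt; simp; omega
    simp only [dif_pos hc]
    by_cases hs : (i.succ).val < d + 1
    · simp only [dif_pos hs]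
      have hlt : i.val < d := by simpa using hs
      have := hA ⟨i.val, hlt⟩
      rw [Fin.castSucc_mk, Fin.succ_mk] at this
      convert this using 3 <;> rfl
    · simp only [dif_neg hs]
      have hi : i.val = d := by have := i.isLt; simp at hs ⊢; omega
      have h1 : (⟨(i.castSucc).val, hc⟩ : Fin (d+1)) = Fin.last d := by
        simp [Fin.ext_iff, hi]
      rw [h1]; exact hf
  · simp
  · have : (0 : Fin (d+1+1)).val < d + 1 := by simp
    simp only [dif_pos this]
    congr

lemma replace_chain {d : ℕ} {a : Fin (d+1) → (Fin n → Bool)} (hm : StrictMono a)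
    (hA : Alternating f a) {y : Fin n → Bool} (hy : a (Fin.last d) ≤ y)
    (hf : f (a (Fin.last d)) = f y) :
    ∃ b : Fin (d+1) → (Fin n → Bool), StrictMono b ∧ Alternating f b ∧
      b (Fin.last d) = y := by
  refine ⟨fun j => if h : j.val < d then a ⟨j.val, by omega⟩ else y, ?_, ?_, ?_⟩
  · intro i j hij
    rcases Fin.lt_def.mp hij with hij'
    by_cases hj : j.val < d
    · have hi : i.val < d := by omega
      simp only [dif_pos hi, dif_pos hj]
      exact hm (Fin.mk_lt_mk.mpr hij')
    · have hi : i.val < d := by have := j.isLt; omega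
      simp only [dif_pos hi, dif_neg hj]
      have h1 : (⟨i.val, by omega⟩ : Fin (d+1)) < Fin.last d := by
        simp [Fin.lt_def]; omega
      exact lt_of_lt_of_le (hm h1) hy
  · intro i
    have hc : (i.castSucc).val < d := by simpa using i.isLt
    simp only [dif_pos hc]
    by_cases hs : (i.succ).val < d
    · simp only [dif_pos hs]
      have := hA i
      have e1 : (⟨(i.castSucc).val, by omega⟩ : Fin (d+1)) = i.castSucc := by
        simp [Fin.ext_iff]
      have e2 : (⟨(i.succ).val, by omega⟩ : Fin (d+1)) = i.succ := by
        simp [Fin.ext_iff]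
      rw [e1, e2]; exact this
    · simp only [dif_neg hs]
      have hi : i.val + 1 = d := by have := i.isLt; simp at hs; omega
      have e1 : (⟨(i.castSucc).val, by omega⟩ : Fin (d+1)) = i.castSucc := by
        simp [Fin.ext_iff]
      have e2 : i.succ = Fin.last d := by simp [Fin.ext_iff]; omega
      rw [e1, ← hf, ← e2]
      exact hA i
  · have : ¬ (Fin.last d).val < d := by simp
    simp only [dif_neg this]

lemma cons_chain {d : ℕ} {a : Fin (d+1) → (Fin n → Bool)} (hm : StrictMono a)
    (hA : Alternating f a) {z : Fin n → Bool} (hz : z < a 0)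
    (hf : f z ≠ f (a 0)) :
    ∃ b : Fin (d+1+1) → (Fin n → Bool), StrictMono b ∧ Alternating f b ∧
      b (Fin.last (d+1)) = a (Fin.last d) ∧ b 0 = z := by
  refine ⟨fun j => if h : 0 < j.val then a ⟨j.val - 1, by omega⟩ else z, ?_, ?_, ?_, ?_⟩
  · intro i j hij
    rcases Fin.lt_def.mp hij with hij'
    have hj : 0 < j.val := by omega
    by_cases hi : 0 < i.val
    · simp only [dif_pos hi, dif_pos hj]
      exact hm (Fin.mk_lt_mk.mpr (by omega))
    · simp only [dif_neg hi, dif_pos hj]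
      exact lt_of_lt_of_le hz (hm.monotone (Fin.zero_le _))
  · intro i
    have hs : 0 < (i.succ).val := by simp
    simp only [dif_pos hs]
    by_cases hc : 0 < (i.castSucc).val
    · simp only [dif_pos hc]
      have hiv : 0 < i.val := by simpa using hc
      have := hA ⟨i.val - 1, by omega⟩
      rw [Fin.castSucc_mk, Fin.succ_mk] at this
      have e1 : (⟨(i.castSucc).val - 1, by omega⟩ : Fin (d+1)) = ⟨i.val - 1, by omega⟩ := by
        simp [Fin.ext_iff]
      have e2 : (⟨(i.succ).val - 1, by omega⟩ : Fin (d+1)) = ⟨i.val - 1 + 1, by omega⟩ := by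
        simp [Fin.ext_iff]; omega
      rw [e1, e2]; exact this
    · simp only [dif_neg hc]
      have hiv : i.val = 0 := by simpa using hc
      have e2 : (⟨(i.succ).val - 1, by omega⟩ : Fin (d+1)) = 0 := by
        exact Fin.ext (by rw [Fin.val_zero]; show i.val + 1 - 1 = 0; omega)
      rw [e2]; exact hf
  · have h1 : 0 < (Fin.last (d+1)).val := by simp
    simp only [dif_pos h1]
    congr 1
  · simp

lemma mem_bound {d : ℕ} {a : Fin (d+1) → (Fin n → Bool)} (hm : StrictMono a) :
    d ≤ 2 ^ n := by
  have h := Fintype.card_le_of_injective a hm.injective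
  simp [Fintype.card_fun] at h
  exact le_of_lt (Nat.lt_of_succ_le h)

lemma altSet_bdd : BddAbove (AltSet f) := ⟨2 ^ n, fun _ ⟨_, hm, _⟩ => mem_bound hm⟩

lemma depSet_bdd (x : Fin n → Bool) : BddAbove (DepSet f x) :=
  ⟨2 ^ n, fun _ ⟨_, hm, _, _⟩ => mem_bound hm⟩

lemma const_strictMono {x : Fin n → Bool} : StrictMono (fun _ : Fin 1 => x) :=
  fun i j hij => absurd hij (by omega)

lemma depSet_nonempty (x : Fin n → Bool) : (DepSet f x).Nonempty :=
  ⟨0, fun _ => x, const_strictMono, fun i => i.elim0, rfl⟩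

lemma altSet_nonempty : (AltSet f).Nonempty :=
  ⟨0, fun _ => (fun _ => false), const_strictMono, fun i => i.elim0⟩

/-- The alternation depth of `x`: longest alternating chain ending at `x`. -/
noncomputable def depth (f : (Fin n → Bool) → Bool) (x : Fin n → Bool) : ℕ :=
  sSup (DepSet f x)

lemma depth_mem (x : Fin n → Bool) : depth f x ∈ DepSet f x :=
  Nat.sSup_mem (depSet_nonempty x) (depSet_bdd x)

lemma le_depth {d : ℕ} {x : Fin n → Bool} (h : d ∈ DepSet f x) : d ≤ depth f x :=
  le_csSup (depSet_bdd x) h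

lemma parity {d : ℕ} {a : Fin (d+1) → (Fin n → Bool)} (hA : Alternating f a)
    (j : Fin (d+1)) : f (a j) = xor (Nat.bodd j.val) (f (a 0)) := by
  induction j using Fin.induction with
  | zero => simp
  | succ i ih =>
    have h1 := hA i
    have h2 : f (a i.succ) = !(f (a i.castSucc)) := by
      cases hval : f (a i.castSucc) <;> cases hval2 : f (a i.succ) <;> simp_all
    rw [h2, ih]
    simp [Nat.bodd_succ, Bool.xor_comm, Bool.not_xor]

lemma depth_mono {x y : Fin n → Bool} (hxy : x ≤ y) : depth f x ≤ depth f y := by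
  obtain ⟨a, hm, hA, hlast⟩ := depth_mem (f := f) x
  by_cases hf : f x = f y
  · obtain ⟨b, hbm, hbA, hblast⟩ := replace_chain hm hA (hlast ▸ hxy) (by rw [hlast]; exact hf)
    exact le_depth ⟨b, hbm, hbA, hblast⟩
  · have hlt : x < y := lt_of_le_of_ne hxy (fun h => hf (h ▸ rfl))
    obtain ⟨b, hbm, hbA, hblast, _⟩ := snoc_chain hm hA (hlast ▸ hlt) (by rw [hlast]; exact hf)
    exact le_trans (Nat.le_succ _) (le_depth ⟨b, hbm, hbA, hblast⟩)

lemma bot_le' (x : Fin n → Bool) : (fun _ => false : Fin n → Bool) ≤ x :=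
  fun i => Bool.false_le (x i)

lemma exists_max_chain (x : Fin n → Bool) :
    ∃ a : Fin (depth f x + 1) → (Fin n → Bool), StrictMono a ∧ Alternating f a ∧
      a (Fin.last _) = x ∧ f (a 0) = f (fun _ => false) := by
  obtain ⟨a, hm, hA, hlast⟩ := depth_mem (f := f) x
  by_cases h0 : f (a 0) = f (fun _ => false)
  · exact ⟨a, hm, hA, hlast, h0⟩
  · exfalso
    have hne : (fun _ => false : Fin n → Bool) ≠ a 0 := fun h => h0 (by rw [← h])
    have hlt : (fun _ => false : Fin n → Bool) < a 0 := lt_of_le_of_ne (bot_le' _) hne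
    obtain ⟨b, hbm, hbA, hblast, _⟩ := cons_chain hm hA hlt (fun h => h0 h.symm)
    have := le_depth ⟨b, hbm, hbA, hblast.trans hlast⟩
    omega

lemma depth_parity (x : Fin n → Bool) :
    f x = xor (Nat.bodd (depth f x)) (f (fun _ => false)) := by
  obtain ⟨a, _, hA, hlast, h0⟩ := exists_max_chain (f := f) x
  have := parity hA (Fin.last _)
  rw [hlast, h0] at this
  simpa using this

lemma altNum_eq : altNum f = sSup (AltSet f) := rfl

lemma depth_le_altNum (x : Fin n → Bool) : depth f x ≤ altNum f := by
  obtain ⟨a, hm, hA, _⟩ := depth_mem (f := f) x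
  exact le_csSup altSet_bdd ⟨a, hm, hA⟩

lemma altNum_eq_depth_top : altNum f = depth f (fun _ => true) := by
  refine le_antisymm ?_ (depth_le_altNum _)
  refine csSup_le altSet_nonempty (fun d ⟨a, hm, hA⟩ => ?_)
  have h1 : d ≤ depth f (a (Fin.last d)) := le_depth ⟨a, hm, hA, rfl⟩
  exact h1.trans (depth_mono (fun i => Bool.le_true _))

end AltAux

open AltAux in
/-- `f` is an `M`-minor of `g` (where `M` is the clone of monotone Boolean
functions) iff `Alt f < Alt g` or `(Alt f, f(0)) = (Alt g, g(0))`. -/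
theorem stmt13 {n m : ℕ} (f : (Fin (n + 1) → Bool) → Bool)
    (g : (Fin (m + 1) → Bool) → Bool) :
    (∃ h : Fin (m + 1) → (Fin (n + 1) → Bool) → Bool, (∀ i, Monotone (h i)) ∧
      ∀ x, f x = g fun i => h i x) ↔
    (altNum f < altNum g ∨
      (altNum f = altNum g ∧ f (fun _ => false) = g (fun _ => false))) := by
  constructor
  · rintro ⟨h, hmono, heq⟩
    have hk : altNum f = depth f (fun _ => true) := altNum_eq_depth_top
    set k := depth f (fun _ => true) with hkdef
    obtain ⟨a, ham, haA, _, ha0⟩ := exists_max_chain (f := f) (fun _ => true)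
    set b : Fin (k+1) → (Fin (m+1) → Bool) := fun j i => h i (a j) with hbdef
    have hbg : ∀ j, g (b j) = f (a j) := fun j => (heq (a j)).symm
    have hbmono : Monotone b := fun j j' hjj' i => hmono i (ham.monotone hjj')
    have hbA : Alternating g b := fun i => by rw [hbg, hbg]; exact haA i
    have hbm : StrictMono b := by
      rw [Fin.strictMono_iff_lt_succ]
      intro i
      refine lt_of_le_of_ne (hbmono (Fin.castSucc_lt_succ : i.castSucc < i.succ).le) (fun hcontr => ?_)
      exact haA i (by rw [← hbg, ← hbg, hcontr])
    have hkg : k ≤ altNum g := le_csSup altSet_bdd ⟨b, hbm, hbA⟩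
    by_cases h0 : f (fun _ => false) = g (fun _ => false)
    · rcases eq_or_lt_of_le (hk ▸ hkg) with he | hl
      · exact Or.inr ⟨he, h0⟩
      · exact Or.inl hl
    · left
      have hgb0 : g (b 0) = f (fun _ => false) := by rw [hbg, ha0]
      have hne : (fun _ => false : Fin (m+1) → Bool) ≠ b 0 := by
        intro hcontr
        exact h0 (by rw [← hgb0, ← hcontr])
      have hlt : (fun _ => false : Fin (m+1) → Bool) < b 0 :=
        lt_of_le_of_ne (bot_le' _) hne
      obtain ⟨c, hcm, hcA, _, _⟩ := cons_chain hbm hbA hlt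
        (by rw [hgb0]; exact fun hc => h0 hc.symm)
      have h2 : k + 1 ≤ altNum g := le_csSup altSet_bdd ⟨c, hcm, hcA⟩
      omega
  · intro hcase
    have hkd : altNum f = depth f (fun _ => true) := altNum_eq_depth_top
    have hld : altNum g = depth g (fun _ => true) := altNum_eq_depth_top
    set L := depth g (fun _ => true) with hLdef
    obtain ⟨z, hzm, hzA, _, hz0⟩ := exists_max_chain (f := g) (fun _ => true)
    set t : ℕ := if f (fun _ => false) = g (fun _ => false) then 0 else 1 with htdef
    have hbound : ∀ x : Fin (n+1) → Bool, depth f x + t < L + 1 := by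
      intro x
      have h1 : depth f x ≤ altNum f := depth_le_altNum x
      by_cases h0 : f (fun _ => false) = g (fun _ => false)
      · have ht0 : t = 0 := by simp [htdef, h0]
        have hkl : altNum f ≤ altNum g := by
          rcases hcase with hlt | ⟨he, _⟩
          · exact hlt.le
          · exact he.le
        omega
      · have ht1 : t = 1 := by simp [htdef, h0]
        have hkl : altNum f < altNum g := by
          rcases hcase with hlt | ⟨_, he⟩
          · exact hlt
          · exact absurd he h0
        omega
    refine ⟨fun i x => z ⟨depth f x + t, hbound x⟩ i, ?_, ?_⟩
    · intro i x y hxy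
      exact hzm.monotone (Fin.mk_le_mk.mpr (by have := depth_mono (f := f) hxy; omega)) i
    · intro x
      show f x = g (z ⟨depth f x + t, hbound x⟩)
      rw [parity hzA ⟨depth f x + t, hbound x⟩, hz0, depth_parity (f := f) x]
      have hval : ((⟨depth f x + t, hbound x⟩ : Fin (L+1)) : ℕ) = depth f x + t := rfl
      rw [hval]
      by_cases h0 : f (fun _ => false) = g (fun _ => false)
      · have ht0 : t = 0 := by simp [htdef, h0]
        rw [ht0]
        simp [h0]
      · have ht1 : t = 1 := by simp [htdef, h0]
        have hgnot : g (fun _ => false) = !(f (fun _ => false)) := by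
          cases h1 : f (fun _ => false) <;> cases h2 : g (fun _ => false) <;> simp_all
        rw [ht1]
        cases hb : Nat.bodd (depth f x) <;> cases hf0 : f (fun _ => false) <;>
          simp [Nat.bodd_succ, hb, hf0, hgnot]
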